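/- A simplicial set X is upper 2-Segal if and only if its upper décalage dec_⊤X is Segal. -/

import Mathlib

open CategoryTheory Simplicial

universe u

/-- A commuting square of sets (top `f`, left `g`, right `h`, bottom `k`) is a pullback
if the canonical map to the fiber product is a bijection. -/
def IsPullbackSet {A B C D : Type u} (f : A → B) (g : A → C) (h : B → D) (k : C → D) : Prop :=
  (∀ a, h (f a) = k (g a)) ∧ ∀ (b : B) (c : C), h b = k c → ∃! a : A, f a = b ∧ g a = c

/-- The upper 2-Segal condition: for every `n ≥ 2` (here `n = m + 2`) and every `0 < i < n`,
the square with top `d_{i+1} : X_{n+1} → X_n`, left `d_0 : X_{n+1} → X_n`,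
right `d_0 : X_n → X_{n-1}`, bottom `d_i : X_n → X_{n-1}` is a pullback. -/
def UpperTwoSegal (X : SSet.{u}) : Prop :=
  ∀ (m i : ℕ), 0 < i → ∀ h2 : i < m + 2,
    IsPullbackSet
      (fun x => X.δ (⟨i + 1, by omega⟩ : Fin (m + 4)) x)
      (fun x => X.δ (0 : Fin (m + 4)) x)
      (fun x => X.δ (0 : Fin (m + 3)) x)
      (fun x => X.δ (⟨i, by omega⟩ : Fin (m + 3)) x)

/-- The Segal condition for the upper décalage `dec⊤ X` (which has `(dec⊤ X)_n = X_{n+1}`,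
with `k`-th face `d_k : X_{n+1} → X_n` for `0 ≤ k ≤ n`), stated explicitly in terms of `X`:
for every `n ≥ 1` (here `n = m + 1`), the Segal square of `dec⊤ X` with
top `d_0 : (dec⊤X)_{n+1} → (dec⊤X)_n`, left `d_{n+1}`, right `d_n`, bottom `d_0`
is the square with top `d_0 : X_{m+3} → X_{m+2}`, left `d_{m+2} : X_{m+3} → X_{m+2}`,
right `d_{m+1} : X_{m+2} → X_{m+1}`, bottom `d_0 : X_{m+2} → X_{m+1}`. -/
def UpperDecSegal (X : SSet.{u}) : Prop :=
  ∀ m : ℕ,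
    IsPullbackSet
      (fun x => X.δ (0 : Fin (m + 4)) x)
      (fun x => X.δ (⟨m + 2, by omega⟩ : Fin (m + 4)) x)
      (fun x => X.δ (⟨m + 1, by omega⟩ : Fin (m + 3)) x)
      (fun x => X.δ (0 : Fin (m + 3)) x)

/-- Swapping the two projections of a pullback square. -/
lemma IsPullbackSet.swap {A B C D : Type u} {f : A → B} {g : A → C} {h : B → D} {k : C → D}
    (H : IsPullbackSet f g h k) : IsPullbackSet g f k h := by
  obtain ⟨H1, H2⟩ := H
  refine ⟨fun a => (H1 a).symm, fun c b hbc => ?_⟩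
  obtain ⟨a, ⟨ha1, ha2⟩, ha3⟩ := H2 b c hbc.symm
  exact ⟨a, ⟨ha2, ha1⟩, fun a' ⟨h1, h2⟩ => ha3 a' ⟨h2, h1⟩⟩

/-- Horizontal pasting: two pullback squares compose to a pullback square. -/
lemma IsPullbackSet.comp {A B C D E F : Type u} {f : A → B} {g : A → C} {h : B → D} {k : C → D}
    {f' : B → E} {h' : E → F} {k' : D → F}
    (HL : IsPullbackSet f g h k) (HR : IsPullbackSet f' h h' k') :
    IsPullbackSet (fun a => f' (f a)) g h' (fun c => k' (k c)) := by
  obtain ⟨L1, L2⟩ := HL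
  obtain ⟨R1, R2⟩ := HR
  refine ⟨fun a => by show h' (f' (f a)) = k' (k (g a)); rw [R1 (f a), L1 a], fun e c hec => ?_⟩
  obtain ⟨b, ⟨hb1, hb2⟩, hb3⟩ := R2 e (k c) hec
  obtain ⟨a, ⟨ha1, ha2⟩, ha3⟩ := L2 b c hb2
  refine ⟨a, ⟨by show f' (f a) = e; rw [ha1, hb1], ha2⟩, ?_⟩
  rintro a' ⟨h1, h2⟩
  have hfb : f a' = b := by
    apply hb3
    refine ⟨h1, ?_⟩
    show h (f a') = k c
    rw [L1 a', h2]
  exact ha3 a' ⟨hfb, h2⟩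

/-- Horizontal cancellation: if the right square and the outer square are pullbacks and the
left square commutes, then the left square is a pullback. -/
lemma IsPullbackSet.cancel {A B C D E F : Type u} {f : A → B} {g : A → C} {h : B → D} {k : C → D}
    {f' : B → E} {h' : E → F} {k' : D → F}
    (comm : ∀ a, h (f a) = k (g a))
    (HR : IsPullbackSet f' h h' k')
    (HO : IsPullbackSet (fun a => f' (f a)) g h' (fun c => k' (k c))) :
    IsPullbackSet f g h k := by
  obtain ⟨R1, R2⟩ := HR
  obtain ⟨O1, O2⟩ := HO
  refine ⟨comm, fun b c hbc => ?_⟩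
  have : h' (f' b) = k' (k c) := by rw [R1 b, hbc]
  obtain ⟨a, ⟨ha1, ha2⟩, ha3⟩ := O2 (f' b) c this
  have hfab : f a = b := by
    obtain ⟨b', hb'1, hb'2⟩ := R2 (f' b) (h b) (R1 b)
    have e1 : b' = f a := (hb'2 (f a) ⟨ha1, by rw [comm a, ha2, hbc]⟩).symm
    have e2 : b' = b := (hb'2 b ⟨rfl, rfl⟩).symm
    rw [← e1, e2]
  refine ⟨a, ⟨hfab, ha2⟩, ?_⟩
  rintro a' ⟨h1, h2⟩
  refine ha3 a' ⟨?_, h2⟩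
  show f' (f a') = f' b
  rw [h1]

/-- The first simplicial identity, in explicit `Fin.mk` form. -/
lemma delta_delta (X : SSet.{u}) (n a b : ℕ) (hab : a < b) (hb : b < n + 3)
    (x : X _⦋n + 2⦌) :
    X.δ (⟨a, by omega⟩ : Fin (n + 2)) (X.δ (⟨b, by omega⟩ : Fin (n + 3)) x)
      = X.δ (⟨b - 1, by omega⟩ : Fin (n + 2)) (X.δ (⟨a, by omega⟩ : Fin (n + 3)) x) := by
  have H : (⟨a, by omega⟩ : Fin (n + 2)) ≤ (⟨b - 1, by omega⟩ : Fin (n + 2)) := by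
    simp only [Fin.mk_le_mk]; omega
  have h1 : ((⟨b - 1, by omega⟩ : Fin (n + 2)).succ : Fin (n + 3)) = ⟨b, by omega⟩ := by
    apply Fin.ext; simp; omega
  have := congrArg (fun f => f x) (X.δ_comp_δ H)
  simp only [types_comp_apply] at this
  rw [h1] at this
  exact this

/-- Replacing the maps of a pullback square by pointwise equal ones. -/
lemma IsPullbackSet.congr {A B C D : Type u} {f f' : A → B} {g g' : A → C} {h h' : B → D}
    {k k' : C → D} (hf : ∀ a, f a = f' a) (hg : ∀ a, g a = g' a) (hh : ∀ b, h b = h' b)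
    (hk : ∀ c, k c = k' c) (H : IsPullbackSet f g h k) : IsPullbackSet f' g' h' k' := by
  have : f = f' := funext hf
  subst this
  have : g = g' := funext hg
  subst this
  have : h = h' := funext hh
  subst this
  have : k = k' := funext hk
  subst this
  exact H

lemma key_lemma (X : SSet.{u}) (hX : UpperDecSegal X) :
    ∀ (k i : ℕ), 0 < i → ∀ _hik : i ≤ k + 1,
    IsPullbackSet
      (fun x => X.δ (⟨i + 1, by omega⟩ : Fin (k + 4)) x)
      (fun x => X.δ (0 : Fin (k + 4)) x)
      (fun x => X.δ (0 : Fin (k + 3)) x)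
      (fun x => X.δ (⟨i, by omega⟩ : Fin (k + 3)) x) := by
  intro k
  induction k with
  | zero =>
    intro i hi hik
    interval_cases i
    exact (hX 0).swap
  | succ k ih =>
    intro i hi hik
    rcases Nat.lt_or_ge i (k + 2) with h | h
    · -- i ≤ k + 1 : pasting argument
      have hik' : i ≤ k + 1 := by omega
      -- Right square: swap of (hX k)
      have HR := (hX k).swap
      -- Outer square: composite of swap (hX (k+1)) and ih
      have HO := IsPullbackSet.comp ((hX (k + 1)).swap) (ih i hi hik')
      refine IsPullbackSet.cancel (f' := fun b => X.δ (⟨k + 2, by omega⟩ : Fin (k + 4)) b)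
        (h' := fun e => X.δ (0 : Fin (k + 3)) e)
        (k' := fun d => X.δ (⟨k + 1, by omega⟩ : Fin (k + 3)) d)
        ?_ HR ?_
      · intro x
        exact delta_delta X (k + 2) 0 (i + 1) (by omega) (by omega) x
      · refine IsPullbackSet.congr ?_ (fun a => rfl) (fun b => rfl) ?_ HO
        · intro x
          exact delta_delta X (k + 2) (i + 1) (k + 3) (by omega) (by omega) x
        · intro c
          exact delta_delta X (k + 1) i (k + 2) (by omega) (by omega) c
    · -- i = k + 2 : this is the décalage Segal square itself
      have : i = k + 2 := by omega
      subst this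
      exact (hX (k + 1)).swap

/-- A simplicial set `X` is upper 2-Segal if and only if its upper décalage `dec⊤ X`
is Segal. -/
theorem upperTwoSegal_iff_upperDec_segal (X : SSet.{u}) :
    UpperTwoSegal X ↔ UpperDecSegal X := by
  constructor
  · intro hX m
    exact (hX m (m + 1) (by omega) (by omega)).swap
  · intro hX m i hi h2
    exact key_lemma X hX m i hi (by omega)
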